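/- Let R be a semiring, V an R-module with an additive spine T of finite cardinality t. Then every submodule U of V that is a (possibly infinite) sum of summand absorbing submodules is generated by U ∩ T; consequently there are at most 2^t such submodules, and every strictly increasing chain U₀ ⊊ U₁ ⊊ ... ⊊ U_r of such submodules has length r ≤ t. -/

import Mathlib

def halo (R : Type*) {V : Type*} [Semiring R] [AddCommMonoid V] [Module R V]
    (S : Set V) : Set V :=
  {v | ∃ l m : R, l • v ∈ S ∧ m • (l • v) = v}

def IsAdditiveSpine (R : Type*) {V : Type*} [Semiring R] [AddCommMonoid V] [Module R V]
    (S : Set V) : Prop :=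
  AddSubmonoid.closure (halo R S) = ⊤

def IsSA {R V : Type*} [Semiring R] [AddCommMonoid V] [Module R V]
    (W : Submodule R V) : Prop :=
  ∀ x y : V, x + y ∈ W → x ∈ W ∧ y ∈ W

/-- `U` is a (possibly infinite) sum of SA-submodules. -/
def IsSigmaSA {R V : Type*} [Semiring R] [AddCommMonoid V] [Module R V]
    (U : Submodule R V) : Prop :=
  ∃ s : Set (Submodule R V), (∀ W ∈ s, IsSA W) ∧ U = sSup s

-- aux: SA submodule is spanned by its intersection with T
lemma sa_span {R V : Type*} [Semiring R] [AddCommMonoid V] [Module R V]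
    {T : Set V} (hT : IsAdditiveSpine R T) {W : Submodule R V} (hW : IsSA W) :
    W = Submodule.span R ((W : Set V) ∩ T) := by
  apply le_antisymm
  · intro u hu
    have hmem : u ∈ AddSubmonoid.closure (halo R T) := by
      rw [hT]; trivial
    have key : ∀ v ∈ AddSubmonoid.closure (halo R T),
        v ∈ W → v ∈ Submodule.span R ((W : Set V) ∩ T) := by
      intro v hv
      induction hv using AddSubmonoid.closure_induction with
      | mem x hx =>
        intro hxW
        obtain ⟨l, m, hlT, hml⟩ := hx
        have hlW : l • x ∈ W := W.smul_mem l hxW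
        have : l • x ∈ Submodule.span R ((W : Set V) ∩ T) :=
          Submodule.subset_span ⟨hlW, hlT⟩
        rw [← hml]
        exact Submodule.smul_mem _ m this
      | zero => intro _; exact Submodule.zero_mem _
      | add x y hx hy ihx ihy =>
        intro hxy
        obtain ⟨hxW, hyW⟩ := hW x y hxy
        exact Submodule.add_mem _ (ihx hxW) (ihy hyW)
    exact key u hmem hu
  · rw [Submodule.span_le]
    exact Set.inter_subset_left

lemma sigma_sa_span {R V : Type*} [Semiring R] [AddCommMonoid V] [Module R V]
    {T : Set V} (hT : IsAdditiveSpine R T) {U : Submodule R V} (hU : IsSigmaSA U) :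
    U = Submodule.span R ((U : Set V) ∩ T) := by
  obtain ⟨s, hs, rfl⟩ := hU
  apply le_antisymm
  · apply sSup_le
    intro W hW
    rw [sa_span hT (hs W hW)]
    apply Submodule.span_mono
    exact Set.inter_subset_inter_left _ (le_sSup hW)
  · rw [Submodule.span_le]; exact Set.inter_subset_left

lemma fin_strictmono_nat {r : ℕ} {g : Fin (r + 1) → ℕ} (hg : StrictMono g) :
    g 0 + r ≤ g (Fin.last r) := by
  have H : ∀ i : Fin (r + 1), g 0 + i.val ≤ g i := by
    intro i
    induction i using Fin.induction with
    | zero => simp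
    | succ i ih =>
      have h1 := hg (Fin.castSucc_lt_succ : i.castSucc < i.succ)
      have h2 : (i.succ : Fin (r+1)).val = i.val + 1 := rfl
      have h3 : (i.castSucc : Fin (r+1)).val = i.val := rfl
      omega
  simpa using H (Fin.last r)

theorem sigmaSA_finite_spine {R V : Type*} [Semiring R] [AddCommMonoid V] [Module R V]
    (T : Finset V) (hT : IsAdditiveSpine R (T : Set V)) :
    (∀ U : Submodule R V, IsSigmaSA U → U = Submodule.span R ((U : Set V) ∩ (T : Set V))) ∧
    {U : Submodule R V | IsSigmaSA U}.Finite ∧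
    {U : Submodule R V | IsSigmaSA U}.ncard ≤ 2 ^ T.card ∧
    (∀ (r : ℕ) (U : Fin (r + 1) → Submodule R V),
      (∀ i, IsSigmaSA (U i)) → StrictMono U → r ≤ T.card) := by
  classical
  set f : Submodule R V → Finset V := fun U => T.filter (· ∈ U) with hf
  have hinter : ∀ U : Submodule R V, ((f U : Set V)) = (U : Set V) ∩ (T : Set V) := by
    intro U; ext x; simp [hf, Finset.mem_filter, and_comm]
  have hinj : Set.InjOn f {U : Submodule R V | IsSigmaSA U} := by
    intro U hU U' hU' h
    rw [sigma_sa_span hT hU, sigma_sa_span hT hU', ← hinter, ← hinter, h]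
  have hmaps : Set.MapsTo f {U : Submodule R V | IsSigmaSA U} (T.powerset : Set (Finset V)) := by
    intro U _
    simp only [Finset.coe_powerset, Set.mem_preimage, Set.mem_powerset_iff, Finset.coe_subset,
      hf]
    exact Finset.filter_subset _ _
  refine ⟨fun U hU => sigma_sa_span hT hU, ?_, ?_, ?_⟩
  · exact Set.Finite.of_finite_image
      (Set.Finite.subset (T.powerset : Finset (Finset V)).finite_toSet
        (Set.image_subset_iff.mpr hmaps)) hinj
  · calc {U : Submodule R V | IsSigmaSA U}.ncard
        ≤ (T.powerset : Set (Finset V)).ncard :=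
          Set.ncard_le_ncard_of_injOn f hmaps hinj (T.powerset.finite_toSet)
    _ = 2 ^ T.card := by rw [Set.ncard_coe_finset, Finset.card_powerset]
  · intro r U hUs hmono
    have hfmono : StrictMono fun i => f (U i) := by
      intro i j hij
      refine Finset.lt_iff_ssubset.mpr ⟨?_, ?_⟩
      · intro x hx
        simp only [hf, Finset.mem_filter] at hx ⊢
        exact ⟨hx.1, (hmono hij).le hx.2⟩
      · intro hsub
        have : f (U i) = f (U j) := le_antisymm (by
          intro x hx
          simp only [hf, Finset.mem_filter] at hx ⊢
          exact ⟨hx.1, (hmono hij).le hx.2⟩) hsub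
        have := hinj (hUs i) (hUs j) this
        exact absurd this (hmono hij).ne
    have hcard : StrictMono fun i => (f (U i)).card :=
      fun i j hij => Finset.card_lt_card (Finset.lt_iff_ssubset.mp (hfmono hij))
    have h1 := fin_strictmono_nat hcard
    have h2 : (f (U (Fin.last r))).card ≤ T.card :=
      Finset.card_le_card (Finset.filter_subset _ _)
    omega
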